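/- In a cube diagram, connect two markings by an axis-parallel segment whenever exactly one of their three coordinates differs and they satisfy the connection rule (segments go from X to Y, from Y to Z, or from Z to X). Then every marking is the endpoint of exactly two segments, and consequently the resulting 1-complex is a disjoint union of cycles. -/

import Mathlib

/-- `a` lies strictly between `b` and `c`. -/
def StrictlyBetween {n : ℕ} (a b c : Fin n) : Prop :=
  min b c < a ∧ a < max b c

/-- Two points of the cube differ in exactly one coordinate (so the segment
joining them is axis-parallel). -/
def SegRel {n : ℕ} (p q : Fin n × Fin n × Fin n) : Prop :=
  (p.1 ≠ q.1 ∧ p.2.1 = q.2.1 ∧ p.2.2 = q.2.2) ∨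
  (p.1 = q.1 ∧ p.2.1 ≠ q.2.1 ∧ p.2.2 = q.2.2) ∨
  (p.1 = q.1 ∧ p.2.1 = q.2.1 ∧ p.2.2 ≠ q.2.2)

/-- A cube diagram of size `n` (markings `X`, `Y`, `Z`, one of each type per
flat, right-angle/corner conditions, crossing conditions). -/
structure CubeDiagram (n : ℕ) where
  X : Fin n → Fin n × Fin n × Fin n
  Y : Fin n → Fin n × Fin n × Fin n
  Z : Fin n → Fin n × Fin n × Fin n
  Xx : Function.Bijective fun i => (X i).1
  Xy : Function.Bijective fun i => (X i).2.1
  Xz : Function.Bijective fun i => (X i).2.2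
  Yx : Function.Bijective fun i => (Y i).1
  Yy : Function.Bijective fun i => (Y i).2.1
  Yz : Function.Bijective fun i => (Y i).2.2
  Zx : Function.Bijective fun i => (Z i).1
  Zy : Function.Bijective fun i => (Z i).2.1
  Zz : Function.Bijective fun i => (Z i).2.2
  XY : ∀ i, ∃ j, (X i).1 = (Y j).1 ∧ (X i).2.1 = (Y j).2.1 ∧ (X i).2.2 ≠ (Y j).2.2
  YZ : ∀ j, ∃ k, (Y j).2.1 = (Z k).2.1 ∧ (Y j).2.2 = (Z k).2.2 ∧ (Y j).1 ≠ (Z k).1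
  ZX : ∀ k, ∃ i, (Z k).1 = (X i).1 ∧ (Z k).2.2 = (X i).2.2 ∧ (Z k).2.1 ≠ (X i).2.1
  -- conversely, by the right-angle and corner conditions any segment joining
  -- an X to a Y is z-parallel, a Y to a Z is x-parallel, and a Z to an X is
  -- y-parallel
  XY' : ∀ i j, SegRel (X i) (Y j) → (X i).1 = (Y j).1 ∧ (X i).2.1 = (Y j).2.1
  YZ' : ∀ j k, SegRel (Y j) (Z k) → (Y j).2.1 = (Z k).2.1 ∧ (Y j).2.2 = (Z k).2.2
  ZX' : ∀ k i, SegRel (Z k) (X i) → (Z k).1 = (X i).1 ∧ (Z k).2.2 = (X i).2.2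
  cross_xy : ∀ i j k k',
    (Y j).2.1 = (Z k).2.1 → (Y j).2.2 = (Z k).2.2 →
    (Z k').1 = (X i).1 → (Z k').2.2 = (X i).2.2 →
    StrictlyBetween (X i).1 (Y j).1 (Z k).1 →
    StrictlyBetween (Y j).2.1 (Z k').2.1 (X i).2.1 →
    (Y j).2.2 < (X i).2.2
  cross_yz : ∀ i j k,
    (X i).1 = (Y j).1 → (X i).2.1 = (Y j).2.1 →
    (∃ i', (Z k).1 = (X i').1 ∧ (Z k).2.2 = (X i').2.2 ∧
      StrictlyBetween (X i).2.1 (Z k).2.1 (X i').2.1) →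
    StrictlyBetween (Z k).2.2 (X i).2.2 (Y j).2.2 →
    (Z k).1 < (X i).1
  cross_zx : ∀ i j j' k,
    (X i).1 = (Y j').1 → (X i).2.1 = (Y j').2.1 →
    (Y j).2.1 = (Z k).2.1 → (Y j).2.2 = (Z k).2.2 →
    StrictlyBetween (X i).1 (Y j).1 (Z k).1 →
    StrictlyBetween (Y j).2.2 (X i).2.2 (Y j').2.2 →
    (X i).2.1 < (Y j).2.1

/-- The marking (as a point of the cube) corresponding to a vertex of the
1-complex of a cube diagram: vertices are the `3n` markings, indexed by type
(`0` for `X`, `1` for `Y`, `2` for `Z`) and index. -/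
def CubeDiagram.pt {n : ℕ} (C : CubeDiagram n) (v : Fin 3 × Fin n) :
    Fin n × Fin n × Fin n :=
  ![C.X, C.Y, C.Z] v.1 v.2

/-- The segments of a cube diagram: an `X` is joined to a `Y`, a `Y` to a `Z`,
or a `Z` to an `X`, whenever exactly one of their coordinates differs. -/
def CubeDiagram.segGraph {n : ℕ} (C : CubeDiagram n) : SimpleGraph (Fin 3 × Fin n) :=
  SimpleGraph.fromRel (fun u v =>
    ((u.1 = 0 ∧ v.1 = 1) ∨ (u.1 = 1 ∧ v.1 = 2) ∨ (u.1 = 2 ∧ v.1 = 0)) ∧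
      SegRel (C.pt u) (C.pt v))

namespace CubeDiagram

variable {n : ℕ} (C : CubeDiagram n)

noncomputable def eXx : Fin n ≃ Fin n := Equiv.ofBijective _ C.Xx
noncomputable def eYx : Fin n ≃ Fin n := Equiv.ofBijective _ C.Yx
noncomputable def eYy : Fin n ≃ Fin n := Equiv.ofBijective _ C.Yy
noncomputable def eZy : Fin n ≃ Fin n := Equiv.ofBijective _ C.Zy
noncomputable def eZx : Fin n ≃ Fin n := Equiv.ofBijective _ C.Zx

@[simp] lemma eXx_symm_X (i : Fin n) : C.eXx.symm ((C.X i).1) = i :=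
  Equiv.ofBijective_symm_apply_apply _ C.Xx i
@[simp] lemma eYx_symm_Y (j : Fin n) : C.eYx.symm ((C.Y j).1) = j :=
  Equiv.ofBijective_symm_apply_apply _ C.Yx j
@[simp] lemma eYy_symm_Y (j : Fin n) : C.eYy.symm ((C.Y j).2.1) = j :=
  Equiv.ofBijective_symm_apply_apply _ C.Yy j
@[simp] lemma eZy_symm_Z (k : Fin n) : C.eZy.symm ((C.Z k).2.1) = k :=
  Equiv.ofBijective_symm_apply_apply _ C.Zy k
@[simp] lemma eZx_symm_Z (k : Fin n) : C.eZx.symm ((C.Z k).1) = k :=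
  Equiv.ofBijective_symm_apply_apply _ C.Zx k

@[simp] lemma X_eXx_symm (x : Fin n) : (C.X (C.eXx.symm x)).1 = x :=
  Equiv.ofBijective_apply_symm_apply _ C.Xx x
@[simp] lemma Y_eYx_symm (x : Fin n) : (C.Y (C.eYx.symm x)).1 = x :=
  Equiv.ofBijective_apply_symm_apply _ C.Yx x
@[simp] lemma Y_eYy_symm (x : Fin n) : (C.Y (C.eYy.symm x)).2.1 = x :=
  Equiv.ofBijective_apply_symm_apply _ C.Yy x
@[simp] lemma Z_eZy_symm (x : Fin n) : (C.Z (C.eZy.symm x)).2.1 = x :=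
  Equiv.ofBijective_apply_symm_apply _ C.Zy x
@[simp] lemma Z_eZx_symm (x : Fin n) : (C.Z (C.eZx.symm x)).1 = x :=
  Equiv.ofBijective_apply_symm_apply _ C.Zx x

/-- The "next" marking: each `X` goes to the unique `Y` sharing its `x` and `y`
coordinates, each `Y` to the unique `Z` sharing its `y` and `z` coordinates,
each `Z` to the unique `X` sharing its `z` and `x` coordinates. -/
noncomputable def nxt (v : Fin 3 × Fin n) : Fin 3 × Fin n :=
  if v.1 = 0 then (1, C.eYx.symm ((C.X v.2).1))
  else if v.1 = 1 then (2, C.eZy.symm ((C.Y v.2).2.1))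
  else (0, C.eXx.symm ((C.Z v.2).1))

/-- The inverse of `nxt`. -/
noncomputable def prv (v : Fin 3 × Fin n) : Fin 3 × Fin n :=
  if v.1 = 0 then (2, C.eZx.symm ((C.X v.2).1))
  else if v.1 = 1 then (0, C.eXx.symm ((C.Y v.2).1))
  else (1, C.eYy.symm ((C.Z v.2).2.1))

@[simp] lemma nxt_zero (a : Fin n) :
    C.nxt (0, a) = (1, C.eYx.symm ((C.X a).1)) := by simp [nxt]
@[simp] lemma nxt_one (a : Fin n) :
    C.nxt (1, a) = (2, C.eZy.symm ((C.Y a).2.1)) := by simp [nxt]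
@[simp] lemma nxt_two (a : Fin n) :
    C.nxt (2, a) = (0, C.eXx.symm ((C.Z a).1)) := by simp [nxt]
@[simp] lemma prv_zero (a : Fin n) :
    C.prv (0, a) = (2, C.eZx.symm ((C.X a).1)) := by simp [prv]
@[simp] lemma prv_one (a : Fin n) :
    C.prv (1, a) = (0, C.eXx.symm ((C.Y a).1)) := by simp [prv]
@[simp] lemma prv_two (a : Fin n) :
    C.prv (2, a) = (1, C.eYy.symm ((C.Z a).2.1)) := by simp [prv]

lemma prv_nxt (v : Fin 3 × Fin n) : C.prv (C.nxt v) = v := by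
  obtain ⟨t, a⟩ := v
  fin_cases t <;> simp

lemma nxt_prv (v : Fin 3 × Fin n) : C.nxt (C.prv v) = v := by
  obtain ⟨t, a⟩ := v
  fin_cases t <;> simp

/-- `nxt` as a permutation of the markings. -/
noncomputable def nxtE : Equiv.Perm (Fin 3 × Fin n) :=
  ⟨C.nxt, C.prv, C.prv_nxt, C.nxt_prv⟩

lemma nxt_fst (v : Fin 3 × Fin n) : (C.nxt v).1 = v.1 + 1 := by
  obtain ⟨t, a⟩ := v
  fin_cases t <;> simp

lemma XY_spec (i j : Fin n) (h : (C.Y j).1 = (C.X i).1) :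
    (C.X i).2.1 = (C.Y j).2.1 ∧ (C.X i).2.2 ≠ (C.Y j).2.2 := by
  obtain ⟨j₀, h1, h2, h3⟩ := C.XY i
  obtain rfl : j = j₀ := C.Yx.injective (h.trans h1)
  exact ⟨h2, h3⟩

lemma YZ_spec (j k : Fin n) (h : (C.Z k).2.1 = (C.Y j).2.1) :
    (C.Y j).2.2 = (C.Z k).2.2 ∧ (C.Y j).1 ≠ (C.Z k).1 := by
  obtain ⟨k₀, h1, h2, h3⟩ := C.YZ j
  obtain rfl : k = k₀ := C.Zy.injective (h.trans h1)
  exact ⟨h2, h3⟩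

lemma ZX_spec (k i : Fin n) (h : (C.X i).1 = (C.Z k).1) :
    (C.Z k).2.2 = (C.X i).2.2 ∧ (C.Z k).2.1 ≠ (C.X i).2.1 := by
  obtain ⟨i₀, h1, h2, h3⟩ := C.ZX k
  obtain rfl : i = i₀ := C.Xx.injective (h.trans h1)
  exact ⟨h2, h3⟩

@[simp] lemma pt_zero (a : Fin n) : C.pt (0, a) = C.X a := rfl
@[simp] lemma pt_one (a : Fin n) : C.pt (1, a) = C.Y a := rfl
@[simp] lemma pt_two (a : Fin n) : C.pt (2, a) = C.Z a := rfl

lemma adj_nxt_zero (a : Fin n) : C.segGraph.Adj (0, a) (C.nxt (0, a)) := by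
  rw [segGraph, SimpleGraph.fromRel_adj]
  obtain ⟨hy, hz⟩ := C.XY_spec a _ (C.Y_eYx_symm ((C.X a).1))
  refine ⟨by simp [Prod.ext_iff], Or.inl ⟨by simp, ?_⟩⟩
  simp only [nxt_zero, pt_zero, pt_one]
  exact Or.inr (Or.inr ⟨(C.Y_eYx_symm _).symm, hy, hz⟩)

lemma adj_nxt_one (a : Fin n) : C.segGraph.Adj (1, a) (C.nxt (1, a)) := by
  rw [segGraph, SimpleGraph.fromRel_adj]
  obtain ⟨hz, hx⟩ := C.YZ_spec a _ (C.Z_eZy_symm ((C.Y a).2.1))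
  refine ⟨by simp [Prod.ext_iff], Or.inl ⟨by simp, ?_⟩⟩
  simp only [nxt_one, pt_one, pt_two]
  exact Or.inl ⟨hx, (C.Z_eZy_symm _).symm, hz⟩

lemma adj_nxt_two (a : Fin n) : C.segGraph.Adj (2, a) (C.nxt (2, a)) := by
  rw [segGraph, SimpleGraph.fromRel_adj]
  obtain ⟨hz, hy⟩ := C.ZX_spec a _ (C.X_eXx_symm ((C.Z a).1))
  refine ⟨by simp [Prod.ext_iff], Or.inl ⟨by simp, ?_⟩⟩
  simp only [nxt_two, pt_two, pt_zero]
  exact Or.inr (Or.inl ⟨(C.X_eXx_symm _).symm, hy, hz⟩)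

lemma adj_nxt (v : Fin 3 × Fin n) : C.segGraph.Adj v (C.nxt v) := by
  obtain ⟨t, a⟩ := v
  fin_cases t
  · exact C.adj_nxt_zero a
  · exact C.adj_nxt_one a
  · exact C.adj_nxt_two a

lemma eq_nxt_of_rel (u w : Fin 3 × Fin n)
    (ht : (u.1 = 0 ∧ w.1 = 1) ∨ (u.1 = 1 ∧ w.1 = 2) ∨ (u.1 = 2 ∧ w.1 = 0))
    (hs : SegRel (C.pt u) (C.pt w)) : w = C.nxt u := by
  obtain ⟨t, a⟩ := u; obtain ⟨s, b⟩ := w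
  rcases ht with ⟨h1, h2⟩ | ⟨h1, h2⟩ | ⟨h1, h2⟩ <;>
    simp only at h1 h2 <;> subst h1 <;> subst h2
  · have h := C.XY' a b (by simpa using hs)
    have hb : C.eYx.symm ((C.X a).1) = b := by rw [h.1]; exact C.eYx_symm_Y b
    simp [hb]
  · have h := C.YZ' a b (by simpa using hs)
    have hb : C.eZy.symm ((C.Y a).2.1) = b := by rw [h.1]; exact C.eZy_symm_Z b
    simp [hb]
  · have h := C.ZX' a b (by simpa using hs)
    have hb : C.eXx.symm ((C.Z a).1) = b := by rw [h.1]; exact C.eXx_symm_X b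
    simp [hb]

lemma adj_iff (v w : Fin 3 × Fin n) :
    C.segGraph.Adj v w ↔ w = C.nxt v ∨ v = C.nxt w := by
  constructor
  · rw [segGraph, SimpleGraph.fromRel_adj]
    rintro ⟨hne, ⟨ht, hs⟩ | ⟨ht, hs⟩⟩
    · exact Or.inl (C.eq_nxt_of_rel _ _ ht hs)
    · exact Or.inr (C.eq_nxt_of_rel _ _ ht hs)
  · rintro (rfl | rfl)
    · exact C.adj_nxt v
    · exact (C.adj_nxt w).symm

lemma neighborSet_eq (v : Fin 3 × Fin n) :
    C.segGraph.neighborSet v = {C.nxt v, C.prv v} := by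
  ext w
  simp only [SimpleGraph.mem_neighborSet, adj_iff, Set.mem_insert_iff,
    Set.mem_singleton_iff]
  constructor
  · rintro (rfl | h)
    · exact Or.inl rfl
    · right; rw [h, prv_nxt]
  · rintro (rfl | rfl)
    · exact Or.inl rfl
    · exact Or.inr (C.nxt_prv v).symm

lemma nxt_ne_prv (v : Fin 3 × Fin n) : C.nxt v ≠ C.prv v := by
  intro h
  have h2 := C.nxt_fst (C.prv v)
  rw [C.nxt_prv, ← h, C.nxt_fst] at h2
  have : ∀ x : Fin 3, ¬ x = x + 1 + 1 := by decide
  exact this v.1 h2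

/-- The walk following `nxt` for `k` steps. -/
noncomputable def iterWalk : (k : ℕ) → (u : Fin 3 × Fin n) →
    C.segGraph.Walk u (C.nxt^[k] u)
  | 0, _ => SimpleGraph.Walk.nil
  | k + 1, u => SimpleGraph.Walk.cons (C.adj_nxt u)
      ((iterWalk k (C.nxt u)).copy rfl (Function.iterate_succ_apply C.nxt k u).symm)

lemma iterWalk_support (k : ℕ) (u : Fin 3 × Fin n) :
    (C.iterWalk k u).support = (List.range (k + 1)).map (fun i => C.nxt^[i] u) := by
  induction k generalizing u with
  | zero => simp [iterWalk]
  | succ k ih =>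
    rw [iterWalk, SimpleGraph.Walk.support_cons, SimpleGraph.Walk.support_copy, ih,
      List.range_succ_eq_map (n := k + 1)]
    simp [List.map_map, Function.comp_def, Function.iterate_succ_apply]

lemma iterWalk_edges (k : ℕ) (u : Fin 3 × Fin n) :
    (C.iterWalk k u).edges =
      (List.range k).map (fun i => s(C.nxt^[i] u, C.nxt^[i + 1] u)) := by
  induction k generalizing u with
  | zero => simp [iterWalk]
  | succ k ih =>
    rw [iterWalk, SimpleGraph.Walk.edges_cons, SimpleGraph.Walk.edges_copy, ih,
      List.range_succ_eq_map (n := k)]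
    simp [List.map_map, Function.comp_def, Function.iterate_succ_apply]

end CubeDiagram

/-- In a cube diagram, every marking is an endpoint of exactly two segments;
consequently the 1-complex formed by the markings and segments is a disjoint
union of cycles (every marking lies on a cycle of the segment graph). -/
theorem cube_diagram_segments_form_cycles
    (n : ℕ) (C : CubeDiagram n) :
    (∀ v, (C.segGraph.neighborSet v).ncard = 2) ∧
    (∀ v, ∃ w : C.segGraph.Walk v v, w.IsCycle) := by
  constructor
  · intro v
    rw [C.neighborSet_eq]
    exact Set.ncard_pair (C.nxt_ne_prv v)
  · intro v
    -- `v` is a periodic point of the permutation `nxt`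
    have hnxt_eq : C.nxt = ⇑C.nxtE := rfl
    have hfin : Function.IsPeriodicPt C.nxt (orderOf C.nxtE) v := by
      show C.nxt^[orderOf C.nxtE] v = v
      rw [hnxt_eq, Equiv.Perm.iterate_eq_pow, pow_orderOf_eq_one]
      rfl
    have hvp : v ∈ Function.periodicPts C.nxt :=
      Function.mk_mem_periodicPts (orderOf_pos C.nxtE) hfin
    set m := Function.minimalPeriod C.nxt v with hm
    have hm0 : 0 < m := Function.minimalPeriod_pos_of_mem_periodicPts hvp
    have hmv : C.nxt^[m] v = v := Function.iterate_minimalPeriod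
    have hinj : Function.Injective C.nxt := C.nxtE.injective
    -- key distinctness property
    have key : ∀ a b : ℕ, a ≤ b → b - a < m → C.nxt^[a] v = C.nxt^[b] v → a = b := by
      intro a b hab hbm h
      by_contra hne
      have hlt : 0 < b - a := by omega
      have hp : Function.IsPeriodicPt C.nxt (b - a) v := by
        have h2 : C.nxt^[a] (C.nxt^[b - a] v) = C.nxt^[a] v := by
          rw [← Function.iterate_add_apply, show a + (b - a) = b from by omega]
          exact h.symm
        exact (hinj.iterate a) h2
      have := hp.minimalPeriod_le hlt
      omega
    have fst_iter : ∀ k, (C.nxt^[k + 1] v).1 = (C.nxt^[k] v).1 + 1 := by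
      intro k
      rw [Function.iterate_succ_apply', C.nxt_fst]
    -- m ≥ 3
    have hm1 : m ≠ 1 := by
      intro h
      have h2 : C.nxt v = v := by
        have h4 := hmv
        rw [h, Function.iterate_one] at h4
        exact h4
      have h3 := C.nxt_fst v
      rw [h2] at h3
      revert h3
      generalize v.1 = x
      revert x
      decide
    have hm2 : m ≠ 2 := by
      intro h
      have h2 : C.nxt (C.nxt v) = v := by
        have h4 := hmv
        rw [h, show (2 : ℕ) = 1 + 1 from rfl, Function.iterate_succ_apply',
          Function.iterate_one] at h4
        exact h4
      have h3 := C.nxt_fst (C.nxt v)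
      rw [h2, C.nxt_fst] at h3
      revert h3
      generalize v.1 = x
      revert x
      decide
    have hm3 : 3 ≤ m := by omega
    -- the path from `nxt v` back to `v`
    have hcast : C.nxt^[m - 1] (C.nxt v) = v := by
      have e : C.nxt^[m - 1] (C.nxt v) = C.nxt^[m - 1 + 1] v :=
        (Function.iterate_succ_apply C.nxt (m - 1) v).symm
      rw [e, show m - 1 + 1 = m from by omega]
      exact hmv
    set p : C.segGraph.Walk (C.nxt v) v :=
      (C.iterWalk (m - 1) (C.nxt v)).copy rfl hcast with hp
    have hsupp : p.support = (List.range m).map (fun i => C.nxt^[i + 1] v) := by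
      rw [hp, SimpleGraph.Walk.support_copy, C.iterWalk_support,
        show m - 1 + 1 = m from by omega]
      exact List.map_congr_left fun i _ => by
        rw [← Function.iterate_succ_apply]
    have hpath : p.IsPath := by
      rw [SimpleGraph.Walk.isPath_def, hsupp]
      refine List.Nodup.map_on ?_ (List.nodup_range (n := m))
      intro i hi j hj hij
      rw [List.mem_range] at hi hj
      rcases le_total i j with h | h
      · have := key (i + 1) (j + 1) (by omega) (by omega) hij
        omega
      · have := key (j + 1) (i + 1) (by omega) (by omega) hij.symm
        omega
    have hedges : s(v, C.nxt v) ∉ p.edges := by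
      rw [hp, SimpleGraph.Walk.edges_copy, C.iterWalk_edges]
      intro hmem
      rw [List.mem_map] at hmem
      obtain ⟨i, hi, hsym⟩ := hmem
      rw [List.mem_range] at hi
      have e1 : C.nxt^[i] (C.nxt v) = C.nxt^[i + 1] v :=
        (Function.iterate_succ_apply C.nxt i v).symm
      have e2 : C.nxt^[i + 1] (C.nxt v) = C.nxt^[i + 1 + 1] v :=
        (Function.iterate_succ_apply C.nxt (i + 1) v).symm
      rw [e1, e2, Sym2.eq_iff] at hsym
      rcases hsym with ⟨h1, h2⟩ | ⟨h1, h2⟩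
      · have h0 : (0 : ℕ) = i + 1 := key 0 (i + 1) (by omega) (by omega)
          (by rw [Function.iterate_zero_apply]; exact h1.symm)
        omega
      · have hi1 : (1 : ℕ) = i + 1 := key 1 (i + 1) (by omega) (by omega)
          (by rw [Function.iterate_one]; exact h1.symm)
        have hi0 : i = 0 := by omega
        subst hi0
        have h0 : (0 : ℕ) = 0 + 1 + 1 := key 0 (0 + 1 + 1) (by omega) (by omega)
          (by rw [Function.iterate_zero_apply]; exact h2.symm)
        omega
    exact ⟨SimpleGraph.Walk.cons (C.adj_nxt v) p,
      SimpleGraph.Path.cons_isCycle ⟨p, hpath⟩ (C.adj_nxt v) hedges⟩
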